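/- Let Σ₁, Σ₂ be positive definite p×p real matrices, n₁, n₂ > 0 real numbers, and μ ∈ R^p a nonzero vector. For a positive definite p×p matrix A, define Δ(A) = ‖A^{1/2}μ‖² and K₂(A) = 4·(A^{1/2}μ)^T A^{1/2}(Σ₁/n₁ + Σ₂/n₂)A^{1/2}(A^{1/2}μ). Then for every positive definite A, Δ(A)/√(K₂(A)) ≤ Δ(A⋆)/√(K₂(A⋆)) where A⋆ = c(Σ₁/n₁ + Σ₂/n₂)^{-1} for any constant c > 0; moreover the maximum value equals (1/2)·√(μ^T(Σ₁/n₁ + Σ₂/n₂)^{-1}μ). -/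

import Mathlib

open Matrix

open scoped ComplexOrder in
/-- The square root of a positive semidefinite matrix, as `Matrix.PosSemidef.sqrt` was defined
in Mathlib (December 2024); the definition has since been removed from Mathlib. -/
noncomputable def Matrix.PosSemidef.sqrt {n : Type*} [Fintype n] [DecidableEq n] {𝕜 : Type*}
    [RCLike 𝕜] {A : Matrix n n 𝕜} (hA : A.PosSemidef) : Matrix n n 𝕜 :=
  hA.1.eigenvectorUnitary.1 * diagonal ((↑) ∘ (√·) ∘ hA.1.eigenvalues) *
    (star hA.1.eigenvectorUnitary : Matrix n n 𝕜)

lemma psd_sqrt_isHermitian {p : ℕ} {A : Matrix (Fin p) (Fin p) ℝ} (hA : A.PosSemidef) :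
    hA.sqrt.IsHermitian := by
  unfold Matrix.PosSemidef.sqrt
  rw [star_eq_conjTranspose]
  exact isHermitian_mul_mul_conjTranspose _ (isHermitian_diagonal _)

lemma Matrix.PosSemidef.sqrt_mul_self {p : ℕ} {A : Matrix (Fin p) (Fin p) ℝ}
    (hA : A.PosSemidef) : hA.sqrt * hA.sqrt = A := by
  unfold Matrix.PosSemidef.sqrt
  have hU : (star hA.1.eigenvectorUnitary : Matrix (Fin p) (Fin p) ℝ) *
      hA.1.eigenvectorUnitary.1 = 1 := Unitary.coe_star_mul_self _
  have hD : diagonal ((RCLike.ofReal : ℝ → ℝ) ∘ (√·) ∘ hA.1.eigenvalues) *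
      diagonal ((RCLike.ofReal : ℝ → ℝ) ∘ (√·) ∘ hA.1.eigenvalues) =
      diagonal (RCLike.ofReal ∘ hA.1.eigenvalues) := by
    rw [diagonal_mul_diagonal]
    congr 1
    funext i
    simp [Real.mul_self_sqrt (hA.eigenvalues_nonneg i)]
  conv_rhs => rw [hA.1.spectral_theorem, Unitary.conjStarAlgAut_apply]
  have key : ∀ X Y Z : Matrix (Fin p) (Fin p) ℝ, Z * X = 1 →
      X * Y * Z * (X * Y * Z) = X * (Y * Y) * Z := by
    intro X Y Z h
    calc _ = X * Y * (Z * X) * Y * Z := by simp only [Matrix.mul_assoc]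
      _ = _ := by rw [h, Matrix.mul_one]; simp only [Matrix.mul_assoc]
  rw [key _ _ _ hU, hD]

section Aux

variable {p : ℕ}

lemma herm_iff_transpose (M : Matrix (Fin p) (Fin p) ℝ) :
    M.IsHermitian ↔ Mᵀ = M := by
  rw [Matrix.IsHermitian, conjTranspose_eq_transpose_of_trivial]

lemma dot_pair_eq (B : Matrix (Fin p) (Fin p) ℝ) (hB : Bᵀ = B) (u v : Fin p → ℝ) :
    (B *ᵥ u) ⬝ᵥ (B *ᵥ v) = u ⬝ᵥ ((B * B) *ᵥ v) := by
  conv_lhs => rw [← hB]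
  rw [mulVec_transpose, ← dotProduct_mulVec, mulVec_mulVec, hB]

lemma quad_eq (B M : Matrix (Fin p) (Fin p) ℝ) (hB : Bᵀ = B) (μ : Fin p → ℝ) :
    (B *ᵥ μ) ⬝ᵥ (M *ᵥ (B *ᵥ μ)) = μ ⬝ᵥ ((B * M * B) *ᵥ μ) := by
  conv_lhs => rw [mulVec_mulVec, ← hB, mulVec_transpose, ← dotProduct_mulVec,
    mulVec_mulVec, ← Matrix.mul_assoc, hB]

lemma cs (a b : Fin p → ℝ) : (a ⬝ᵥ b)^2 ≤ (a ⬝ᵥ a) * (b ⬝ᵥ b) := by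
  have := Finset.sum_mul_sq_le_sq_mul_sq Finset.univ a b
  simpa [dotProduct, sq] using this

/-- Cauchy–Schwarz consequence: `q² ≤ r * t`. -/
lemma key_cs (S A : Matrix (Fin p) (Fin p) ℝ) (hS : S.PosDef) (hA : Aᵀ = A)
    (μ : Fin p → ℝ) :
    (μ ⬝ᵥ (A *ᵥ μ))^2 ≤ (μ ⬝ᵥ ((A * S * A) *ᵥ μ)) * (μ ⬝ᵥ (S⁻¹ *ᵥ μ)) := by
  have hdet : IsUnit S.det := (ne_of_gt hS.det_pos).isUnit
  have hSS : S * S⁻¹ = 1 := Matrix.mul_nonsing_inv S hdet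
  have hR := psd_sqrt_isHermitian hS.posSemidef
  set R := hS.posSemidef.sqrt with hRdef
  have hRR : R * R = S := hS.posSemidef.sqrt_mul_self
  have hRsym : Rᵀ = R := (herm_iff_transpose R).mp hR
  have hSinv : (S⁻¹)ᵀ = S⁻¹ := (herm_iff_transpose _).mp hS.inv.1
  have h1 : (R *ᵥ (A *ᵥ μ)) ⬝ᵥ (R *ᵥ (S⁻¹ *ᵥ μ)) = μ ⬝ᵥ (A *ᵥ μ) := by
    rw [dot_pair_eq R hRsym, hRR, mulVec_mulVec, hSS, one_mulVec, dotProduct_comm]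
  have h2 : (R *ᵥ (A *ᵥ μ)) ⬝ᵥ (R *ᵥ (A *ᵥ μ)) = μ ⬝ᵥ ((A * S * A) *ᵥ μ) := by
    rw [dot_pair_eq R hRsym, hRR, ← quad_eq A S hA μ, mulVec_mulVec]
  have h3 : (R *ᵥ (S⁻¹ *ᵥ μ)) ⬝ᵥ (R *ᵥ (S⁻¹ *ᵥ μ)) = μ ⬝ᵥ (S⁻¹ *ᵥ μ) := by
    rw [dot_pair_eq R hRsym, hRR, mulVec_mulVec, hSS, one_mulVec, dotProduct_comm]
  rw [← h1, ← h2, ← h3]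
  exact cs _ _

/-- The generic upper bound. -/
lemma ratio_bound (S B : Matrix (Fin p) (Fin p) ℝ) (hS : S.PosDef) (hB : Bᵀ = B)
    (μ : Fin p → ℝ) (ht : 0 < μ ⬝ᵥ (S⁻¹ *ᵥ μ)) :
    ((B *ᵥ μ) ⬝ᵥ (B *ᵥ μ)) /
      Real.sqrt (4 * ((B *ᵥ μ) ⬝ᵥ ((B * S * B) *ᵥ (B *ᵥ μ))))
      ≤ Real.sqrt (μ ⬝ᵥ (S⁻¹ *ᵥ μ)) / 2 := by
  set A := B * B with hAdef
  have hAsym : Aᵀ = A := by rw [hAdef, transpose_mul, hB]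
  set t := μ ⬝ᵥ (S⁻¹ *ᵥ μ)
  set q := μ ⬝ᵥ (A *ᵥ μ) with hq
  set r := μ ⬝ᵥ ((A * S * A) *ᵥ μ) with hr
  have hnum : (B *ᵥ μ) ⬝ᵥ (B *ᵥ μ) = q := dot_pair_eq B hB μ μ
  have hden : (B *ᵥ μ) ⬝ᵥ ((B * S * B) *ᵥ (B *ᵥ μ)) = r := by
    rw [quad_eq _ _ hB]
    congr 1
    simp only [hAdef, Matrix.mul_assoc]
  rw [hnum, hden]
  have hcs : q^2 ≤ r * t := key_cs S A hS hAsym μ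
  rcases le_or_gt q 0 with hq0 | hq0
  · exact le_trans (div_nonpos_iff.mpr (Or.inr ⟨hq0, Real.sqrt_nonneg _⟩))
      (div_nonneg (Real.sqrt_nonneg _) (by norm_num))
  · have hrpos : 0 < r := by nlinarith [sq_nonneg q]
    have h4r : Real.sqrt (4 * r) = 2 * Real.sqrt r := by
      rw [show (4:ℝ) * r = 2^2 * r by ring, Real.sqrt_mul (by positivity),
        Real.sqrt_sq (by norm_num)]
    rw [h4r, div_le_div_iff₀ (by positivity) (by norm_num)]
    have : q ≤ Real.sqrt (r * t) := Real.le_sqrt_of_sq_le (by nlinarith)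
    rw [Real.sqrt_mul hrpos.le] at this
    nlinarith [Real.sqrt_nonneg r, Real.sqrt_nonneg t]

end Aux

/-- Optimality of `A⋆ = c(Σ₁/n₁ + Σ₂/n₂)⁻¹`: among positive definite `A`, the
ratio `Δ(A)/√(K₂(A))`, with `Δ(A) = ‖A^{1/2}μ‖²` and
`K₂(A) = 4 (A^{1/2}μ)ᵀ A^{1/2}(Σ₁/n₁ + Σ₂/n₂)A^{1/2}(A^{1/2}μ)`,
is maximized by `A⋆`, and the maximal value is `(1/2)√(μᵀ(Σ₁/n₁+Σ₂/n₂)⁻¹μ)`. -/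
theorem ratio_maximized_by_inverse_combination
    (p : ℕ) (n₁ n₂ : ℝ) (hn₁ : 0 < n₁) (hn₂ : 0 < n₂)
    (Sig₁ Sig₂ : Matrix (Fin p) (Fin p) ℝ)
    (hSig₁ : Sig₁.PosDef) (hSig₂ : Sig₂.PosDef)
    (μ : Fin p → ℝ) (hμ : μ ≠ 0) (c : ℝ) (hc : 0 < c) :
    ∀ hAstar : ((c • (n₁⁻¹ • Sig₁ + n₂⁻¹ • Sig₂)⁻¹ : Matrix (Fin p) (Fin p) ℝ)).PosSemidef,
      (∀ (A : Matrix (Fin p) (Fin p) ℝ) (hA : A.PosDef),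
        ((hA.posSemidef.sqrt *ᵥ μ) ⬝ᵥ (hA.posSemidef.sqrt *ᵥ μ)) /
            Real.sqrt (4 * ((hA.posSemidef.sqrt *ᵥ μ) ⬝ᵥ
              ((hA.posSemidef.sqrt * (n₁⁻¹ • Sig₁ + n₂⁻¹ • Sig₂) * hA.posSemidef.sqrt) *ᵥ
                (hA.posSemidef.sqrt *ᵥ μ))))
          ≤ ((hAstar.sqrt *ᵥ μ) ⬝ᵥ (hAstar.sqrt *ᵥ μ)) /
            Real.sqrt (4 * ((hAstar.sqrt *ᵥ μ) ⬝ᵥ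
              ((hAstar.sqrt * (n₁⁻¹ • Sig₁ + n₂⁻¹ • Sig₂) * hAstar.sqrt) *ᵥ
                (hAstar.sqrt *ᵥ μ)))))
      ∧ ((hAstar.sqrt *ᵥ μ) ⬝ᵥ (hAstar.sqrt *ᵥ μ)) /
            Real.sqrt (4 * ((hAstar.sqrt *ᵥ μ) ⬝ᵥ
              ((hAstar.sqrt * (n₁⁻¹ • Sig₁ + n₂⁻¹ • Sig₂) * hAstar.sqrt) *ᵥ
                (hAstar.sqrt *ᵥ μ))))
          = (1 / 2) * Real.sqrt (μ ⬝ᵥ ((n₁⁻¹ • Sig₁ + n₂⁻¹ • Sig₂)⁻¹ *ᵥ μ)) := by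
  intro hAstar
  set S : Matrix (Fin p) (Fin p) ℝ := n₁⁻¹ • Sig₁ + n₂⁻¹ • Sig₂ with hSdef
  have hS : S.PosDef := by
    refine PosDef.of_dotProduct_mulVec_pos ?_ ?_
    · rw [herm_iff_transpose]
      simp [hSdef, transpose_add, transpose_smul,
        (herm_iff_transpose Sig₁).mp hSig₁.1, (herm_iff_transpose Sig₂).mp hSig₂.1]
    · intro x hx
      have h1 := hSig₁.dotProduct_mulVec_pos hx
      have h2 := hSig₂.dotProduct_mulVec_pos hx
      simp only [star_trivial] at h1 h2 ⊢
      simp only [hSdef, add_mulVec, smul_mulVec, dotProduct_add, dotProduct_smul,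
        smul_eq_mul]
      have := inv_pos.mpr hn₁
      have := inv_pos.mpr hn₂
      nlinarith
  have hdet : IsUnit S.det := (ne_of_gt hS.det_pos).isUnit
  have hSS : S * S⁻¹ = 1 := Matrix.mul_nonsing_inv S hdet
  have hSSi : S⁻¹ * S = 1 := Matrix.nonsing_inv_mul S hdet
  set t := μ ⬝ᵥ (S⁻¹ *ᵥ μ) with htdef
  have ht : 0 < t := by
    have := hS.inv.dotProduct_mulVec_pos hμ
    simpa [star_trivial] using this
  -- the value at A⋆
  set B := hAstar.sqrt with hBdef
  have hBB : B * B = c • S⁻¹ := hAstar.sqrt_mul_self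
  have hBsym : Bᵀ = B := (herm_iff_transpose B).mp (psd_sqrt_isHermitian hAstar)
  have hnum : (B *ᵥ μ) ⬝ᵥ (B *ᵥ μ) = c * t := by
    rw [dot_pair_eq B hBsym, hBB, smul_mulVec, dotProduct_smul, smul_eq_mul]
  have hBSB : B * (B * S * B) * B = (c * c) • S⁻¹ := by
    have : B * (B * S * B) * B = (B * B) * S * (B * B) := by
      simp only [Matrix.mul_assoc]
    rw [this, hBB]
    simp only [Matrix.smul_mul, Matrix.mul_smul, smul_smul, hSSi, Matrix.one_mul]
  have hden : (B *ᵥ μ) ⬝ᵥ ((B * S * B) *ᵥ (B *ᵥ μ)) = c * c * t := by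
    rw [quad_eq _ _ hBsym, hBSB, smul_mulVec, dotProduct_smul, smul_eq_mul]
  have hval : ((B *ᵥ μ) ⬝ᵥ (B *ᵥ μ)) /
      Real.sqrt (4 * ((B *ᵥ μ) ⬝ᵥ ((B * S * B) *ᵥ (B *ᵥ μ))))
      = (1 / 2) * Real.sqrt t := by
    rw [hnum, hden]
    have h4 : Real.sqrt (4 * (c * c * t)) = 2 * c * Real.sqrt t := by
      rw [show (4:ℝ) * (c * c * t) = (2*c)^2 * t by ring, Real.sqrt_mul (by positivity),
        Real.sqrt_sq (by positivity)]
    rw [h4]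
    have hst : Real.sqrt t > 0 := Real.sqrt_pos.mpr ht
    have hts : Real.sqrt t * Real.sqrt t = t := Real.mul_self_sqrt ht.le
    field_simp
    nlinarith
  constructor
  · intro A hA
    rw [hval]
    have hAsqsym : (hA.posSemidef.sqrt)ᵀ = hA.posSemidef.sqrt :=
      (herm_iff_transpose _).mp (psd_sqrt_isHermitian hA.posSemidef)
    have := ratio_bound S hA.posSemidef.sqrt hS hAsqsym μ ht
    calc _ ≤ Real.sqrt t / 2 := this
      _ = (1/2) * Real.sqrt t := by ring
  · rw [hval]
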